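/- Let G be a finite simple graph containing four distinct vertices u, v, w, x such that the induced subgraph of G on X = {u, v, w, x} has edge set exactly {uv, vw, wu, vx} (a triangle uvw together with the edge vx), and such that deg_G(u) = deg_G(v) = 4 and deg_G(w) = deg_G(x) = 3. If G − X is (2,1)-decomposable, then G is (2,1)-decomposable. -/

import Mathlib

/-- A graph `G` is `d`-degenerate if every nonempty (induced) subgraph has a
vertex of degree at most `d`. -/
def SimpleGraph.DegenerateLE {V : Type*} (G : SimpleGraph V) (d : ℕ) : Prop :=
  ∀ S : Set V, S.Nonempty → ∃ v ∈ S, (S ∩ G.neighborSet v).ncard ≤ d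

/-- A graph `G` is `(d, h)`-decomposable if there is a subgraph `H` of `G` with
maximum degree at most `h` such that `G - E(H)` is `d`-degenerate. -/
def SimpleGraph.IsDecomposable {V : Type*} (G : SimpleGraph V) (d h : ℕ) : Prop :=
  ∃ H : SimpleGraph V, H ≤ G ∧ (∀ v, (H.neighborSet v).ncard ≤ h) ∧
    (G \ H).DegenerateLE d

set_option maxHeartbeats 1000000

/-- Reducible configuration of Figure 5(a): a triangle `uvw` together with the
pendant edge `vx`, inducing exactly these four edges, with `deg u = deg v = 4`
and `deg w = deg x = 3`. -/
theorem statement4 {V : Type*} [Fintype V] (G : SimpleGraph V) (u v w x : V)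
    (hne : [u, v, w, x].Pairwise (· ≠ ·))
    (hind : ∀ a ∈ ({u, v, w, x} : Set V), ∀ b ∈ ({u, v, w, x} : Set V),
      (G.Adj a b ↔ s(a, b) ∈ ({s(u, v), s(v, w), s(w, u), s(v, x)} : Set (Sym2 V))))
    (hdu : (G.neighborSet u).ncard = 4) (hdv : (G.neighborSet v).ncard = 4)
    (hdw : (G.neighborSet w).ncard = 3) (hdx : (G.neighborSet x).ncard = 3)
    (h : (G.induce (({u, v, w, x} : Set V)ᶜ)).IsDecomposable 2 1) :
    G.IsDecomposable 2 1 := by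
  classical
  simp only [List.pairwise_cons, List.mem_cons, List.mem_singleton, List.not_mem_nil,
    forall_eq_or_imp, forall_eq, List.Pairwise.nil, and_true, List.mem_singleton] at hne
  obtain ⟨⟨huv, huw, hux⟩, ⟨hvw, hvx⟩, hwx⟩ :
      (u ≠ v ∧ u ≠ w ∧ u ≠ x) ∧ (v ≠ w ∧ v ≠ x) ∧ w ≠ x := by tauto
  set X : Set V := {u, v, w, x} with hX
  -- basic adjacencies
  have hGuv : G.Adj u v := (hind u (by simp [hX]) v (by simp [hX])).mpr (by simp)
  have hGvw : G.Adj v w := (hind v (by simp [hX]) w (by simp [hX])).mpr (by simp)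
  have hGwu : G.Adj w u := (hind w (by simp [hX]) u (by simp [hX])).mpr (by simp)
  have hGvx : G.Adj v x := (hind v (by simp [hX]) x (by simp [hX])).mpr (by simp)
  have hGuw : G.Adj u w := hGwu.symm
  obtain ⟨H', hH'le, hH'deg, hH'dgn⟩ := h
  -- the lifted matching
  set Hlift : SimpleGraph V := H'.map (Function.Embedding.subtype _) with hHliftdef
  have hHlift : ∀ a b : V, Hlift.Adj a b ↔
      ∃ (ha : a ∈ Xᶜ) (hb : b ∈ Xᶜ), H'.Adj ⟨a, ha⟩ ⟨b, hb⟩ := by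
    intro a b
    constructor
    · rintro ⟨-, a', b', hab, rfl, rfl⟩
      exact ⟨a'.2, b'.2, hab⟩
    · rintro ⟨ha, hb, hab⟩
      exact ⟨fun he => H'.ne_of_adj hab (Subtype.ext he), ⟨a, ha⟩, ⟨b, hb⟩, hab, rfl, rfl⟩
  -- the extra matching on X
  set K : SimpleGraph V := SimpleGraph.fromEdgeSet {s(u, w), s(v, x)} with hKdef
  have hK : ∀ a b : V, K.Adj a b ↔
      (a = u ∧ b = w) ∨ (a = w ∧ b = u) ∨ (a = v ∧ b = x) ∨ (a = x ∧ b = v) := by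
    intro a b
    rw [hKdef, SimpleGraph.fromEdgeSet_adj]
    simp only [Set.mem_insert_iff, Set.mem_singleton_iff, Sym2.eq_iff]
    constructor
    · rintro ⟨h1 | h1, -⟩ <;> tauto
    · rintro (⟨rfl, rfl⟩ | ⟨rfl, rfl⟩ | ⟨rfl, rfl⟩ | ⟨rfl, rfl⟩) <;>
        exact ⟨by tauto, by tauto⟩
  set H : SimpleGraph V := Hlift ⊔ K with hHdef
  have hHadj : ∀ a b : V, H.Adj a b ↔ Hlift.Adj a b ∨ K.Adj a b := fun a b => Iff.rfl
  -- key adjacencies of H inside X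
  have hHuw : H.Adj u w := Or.inr ((hK u w).mpr (by tauto))
  have hHvx : H.Adj v x := Or.inr ((hK v x).mpr (by tauto))
  -- vertices of X are not touched by Hlift
  have hHliftX : ∀ a b : V, a ∈ X → ¬ Hlift.Adj a b := by
    intro a b ha hab
    obtain ⟨ha', -, -⟩ := (hHlift a b).mp hab
    exact ha' ha
  refine ⟨H, ?_, ?_, ?_⟩
  · -- H ≤ G
    rw [hHdef]
    refine sup_le ?_ ?_
    · intro a b hab
      obtain ⟨ha, hb, hab⟩ := (hHlift a b).mp hab
      exact hH'le hab
    · intro a b hab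
      rcases (hK a b).mp hab with ⟨rfl, rfl⟩ | ⟨rfl, rfl⟩ | ⟨rfl, rfl⟩ | ⟨rfl, rfl⟩
      · exact hGuw
      · exact hGwu
      · exact hGvx
      · exact hGvx.symm
  · -- max degree of H at most 1
    intro y
    by_cases hy : y ∈ X
    · -- H.neighborSet y is a singleton
      have : ∃ z, H.neighborSet y = {z} := by
        rw [hX, Set.mem_insert_iff, Set.mem_insert_iff, Set.mem_insert_iff,
          Set.mem_singleton_iff] at hy
        rcases hy with rfl | rfl | rfl | rfl
        · refine ⟨w, ?_⟩
          ext b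
          simp only [SimpleGraph.mem_neighborSet, Set.mem_singleton_iff]
          constructor
          · intro hb
            rcases (hHadj y b).mp hb with hb | hb
            · exact absurd hb (hHliftX y b (by simp [hX]))
            · rcases (hK y b).mp hb with ⟨-, rfl⟩ | ⟨h1, -⟩ | ⟨h1, -⟩ | ⟨h1, -⟩ <;> tauto
          · rintro rfl; exact hHuw
        · refine ⟨x, ?_⟩
          ext b
          simp only [SimpleGraph.mem_neighborSet, Set.mem_singleton_iff]
          constructor
          · intro hb
            rcases (hHadj y b).mp hb with hb | hb
            · exact absurd hb (hHliftX y b (by simp [hX]))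
            · rcases (hK y b).mp hb with ⟨h1, -⟩ | ⟨h1, -⟩ | ⟨-, rfl⟩ | ⟨h1, -⟩ <;> tauto
          · rintro rfl; exact hHvx
        · refine ⟨u, ?_⟩
          ext b
          simp only [SimpleGraph.mem_neighborSet, Set.mem_singleton_iff]
          constructor
          · intro hb
            rcases (hHadj y b).mp hb with hb | hb
            · exact absurd hb (hHliftX y b (by simp [hX]))
            · rcases (hK y b).mp hb with ⟨h1, -⟩ | ⟨-, rfl⟩ | ⟨h1, -⟩ | ⟨h1, -⟩ <;> tauto
          · rintro rfl; exact hHuw.symm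
        · refine ⟨v, ?_⟩
          ext b
          simp only [SimpleGraph.mem_neighborSet, Set.mem_singleton_iff]
          constructor
          · intro hb
            rcases (hHadj y b).mp hb with hb | hb
            · exact absurd hb (hHliftX y b (by simp [hX]))
            · rcases (hK y b).mp hb with ⟨h1, -⟩ | ⟨h1, -⟩ | ⟨h1, -⟩ | ⟨-, rfl⟩ <;> tauto
          · rintro rfl; exact hHvx.symm
      obtain ⟨z, hz⟩ := this
      rw [hz, Set.ncard_singleton]
    · -- y outside X: neighbors come from Hlift only
      have hyc : y ∈ Xᶜ := hy
      have heq : H.neighborSet y = Subtype.val '' (H'.neighborSet ⟨y, hyc⟩) := by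
        ext b
        simp only [SimpleGraph.mem_neighborSet, Set.mem_image]
        constructor
        · intro hb
          rcases (hHadj y b).mp hb with hb | hb
          · obtain ⟨ha, hb', hab⟩ := (hHlift y b).mp hb
            exact ⟨⟨b, hb'⟩, hab, rfl⟩
          · rcases (hK y b).mp hb with ⟨rfl, -⟩ | ⟨rfl, -⟩ | ⟨rfl, -⟩ | ⟨rfl, -⟩ <;>
              exact absurd (by simp [hX]) hy
        · rintro ⟨⟨b', hb'⟩, hab, rfl⟩
          exact Or.inl ((hHlift y b').mpr ⟨hyc, hb', hab⟩)
      rw [heq, Set.ncard_image_of_injective _ Subtype.val_injective]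
      exact hH'deg _
  · -- 2-degeneracy of G \ H
    intro S hS
    by_cases hxS : x ∈ S
    · refine ⟨x, hxS, ?_⟩
      have hsub : S ∩ (G \ H).neighborSet x ⊆ G.neighborSet x \ {v} := by
        rintro z ⟨hzS, hz⟩
        rw [SimpleGraph.mem_neighborSet, SimpleGraph.sdiff_adj] at hz
        refine ⟨hz.1, ?_⟩
        rintro rfl
        exact hz.2 hHvx.symm
      calc (S ∩ (G \ H).neighborSet x).ncard
          ≤ (G.neighborSet x \ {v}).ncard := Set.ncard_le_ncard hsub (Set.toFinite _)
        _ = 2 := by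
            have hm : v ∈ G.neighborSet x := hGvx.symm
            rw [Set.ncard_diff_singleton_of_mem hm, hdx]
    · by_cases hwS : w ∈ S
      · refine ⟨w, hwS, ?_⟩
        have hsub : S ∩ (G \ H).neighborSet w ⊆ G.neighborSet w \ {u} := by
          rintro z ⟨hzS, hz⟩
          rw [SimpleGraph.mem_neighborSet, SimpleGraph.sdiff_adj] at hz
          refine ⟨hz.1, ?_⟩
          rintro rfl
          exact hz.2 hHuw.symm
        calc (S ∩ (G \ H).neighborSet w).ncard
            ≤ (G.neighborSet w \ {u}).ncard := Set.ncard_le_ncard hsub (Set.toFinite _)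
          _ = 2 := by
              have hm : u ∈ G.neighborSet w := hGwu
              rw [Set.ncard_diff_singleton_of_mem hm, hdw]
      · by_cases hvS : v ∈ S
        · refine ⟨v, hvS, ?_⟩
          have hsub : S ∩ (G \ H).neighborSet v ⊆ (G.neighborSet v \ {w}) \ {x} := by
            rintro z ⟨hzS, hz⟩
            rw [SimpleGraph.mem_neighborSet, SimpleGraph.sdiff_adj] at hz
            refine ⟨⟨hz.1, ?_⟩, ?_⟩
            · rintro rfl; exact hwS hzS
            · rintro rfl; exact hxS hzS
          calc (S ∩ (G \ H).neighborSet v).ncard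
              ≤ ((G.neighborSet v \ {w}) \ {x}).ncard :=
                Set.ncard_le_ncard hsub (Set.toFinite _)
            _ = 2 := by
                have hm1 : x ∈ G.neighborSet v \ {w} :=
                  ⟨hGvx, fun hc => hwx (hc.symm)⟩
                have hm2 : w ∈ G.neighborSet v := hGvw
                rw [Set.ncard_diff_singleton_of_mem hm1,
                  Set.ncard_diff_singleton_of_mem hm2, hdv]
        · by_cases huS : u ∈ S
          · refine ⟨u, huS, ?_⟩
            have hsub : S ∩ (G \ H).neighborSet u ⊆ (G.neighborSet u \ {v}) \ {w} := by
              rintro z ⟨hzS, hz⟩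
              rw [SimpleGraph.mem_neighborSet, SimpleGraph.sdiff_adj] at hz
              refine ⟨⟨hz.1, ?_⟩, ?_⟩
              · rintro rfl; exact hvS hzS
              · rintro rfl; exact hwS hzS
            calc (S ∩ (G \ H).neighborSet u).ncard
                ≤ ((G.neighborSet u \ {v}) \ {w}).ncard :=
                  Set.ncard_le_ncard hsub (Set.toFinite _)
              _ = 2 := by
                  have hm1 : w ∈ G.neighborSet u \ {v} :=
                    ⟨hGuw, fun hc => hvw (hc.symm)⟩
                  have hm2 : v ∈ G.neighborSet u := hGuv
                  rw [Set.ncard_diff_singleton_of_mem hm1,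
                    Set.ncard_diff_singleton_of_mem hm2, hdu]
          · -- S ⊆ Xᶜ : use the decomposition of G - X
            have hSsub : S ⊆ Xᶜ := by
              intro z hz hzX
              rw [hX, Set.mem_insert_iff, Set.mem_insert_iff, Set.mem_insert_iff,
                Set.mem_singleton_iff] at hzX
              rcases hzX with rfl | rfl | rfl | rfl
              · exact huS hz
              · exact hvS hz
              · exact hwS hz
              · exact hxS hz
            set S' : Set ↥(Xᶜ) := Subtype.val ⁻¹' S with hS'def
            have hS'ne : S'.Nonempty := by
              obtain ⟨z, hz⟩ := hS
              exact ⟨⟨z, hSsub hz⟩, hz⟩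
            obtain ⟨y, hyS', hycard⟩ := hH'dgn S' hS'ne
            refine ⟨(y : V), hyS', ?_⟩
            have heq : S ∩ (G \ H).neighborSet (y : V) =
                Subtype.val '' (S' ∩ (G.induce Xᶜ \ H').neighborSet y) := by
              ext z
              simp only [Set.mem_inter_iff, SimpleGraph.mem_neighborSet,
                SimpleGraph.sdiff_adj, Set.mem_image]
              constructor
              · rintro ⟨hzS, hGz, hHz⟩
                refine ⟨⟨z, hSsub hzS⟩, ⟨hzS, ⟨hGz, ?_⟩⟩, rfl⟩
                intro hadj
                exact hHz (Or.inl ((hHlift (y : V) z).mpr ⟨y.2, hSsub hzS, hadj⟩))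
              · rintro ⟨⟨z', hz'⟩, ⟨hz'S, hGz', hHz'⟩, rfl⟩
                refine ⟨hz'S, hGz', ?_⟩
                intro hadj
                rcases (hHadj (y : V) z').mp hadj with hadj | hadj
                · obtain ⟨ha, hb, hadj⟩ := (hHlift (y : V) z').mp hadj
                  exact hHz' hadj
                · rcases (hK (y : V) z').mp hadj with ⟨h1, -⟩ | ⟨h1, -⟩ | ⟨h1, -⟩ | ⟨h1, -⟩ <;>
                    exact y.2 (by rw [h1]; simp [hX])
            rw [heq, Set.ncard_image_of_injective _ Subtype.val_injective]
            exact hycard
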